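/- Let T : W → V be a linear map between n-dimensional real inner product spaces, n ≥ 3, and suppose the induced map Λ²T is norm-nonincreasing: |Tu ∧ Tv|-type estimate |Λ²T(ω)| ≤ |ω| for all ω ∈ Λ²(W). If there is an orthonormal basis {ε_i} of W such that |Tε_i ∧ Tε_j| = 1 for all i < j, then the vectors {Tε_i} are pairwise orthogonal. -/

import Mathlib

/-- If `Λ²T` is norm-nonincreasing and `|Tε_i ∧ Tε_j| = 1` for all `i < j` in an
orthonormal basis `{ε_i}` (with `n ≥ 3`), then the vectors `Tε_i` are pairwise
orthogonal.  Exterior squares are modelled by Gram-determinant wedge pairings. -/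
theorem stmt_13 (n : ℕ) (hn : 3 ≤ n)
    {W V LW LV : Type*}
    [NormedAddCommGroup W] [InnerProductSpace ℝ W]
    [NormedAddCommGroup V] [InnerProductSpace ℝ V]
    [NormedAddCommGroup LW] [InnerProductSpace ℝ LW]
    [NormedAddCommGroup LV] [InnerProductSpace ℝ LV]
    (hdimW : Module.finrank ℝ W = n) (hdimV : Module.finrank ℝ V = n)
    (wW : W →ₗ[ℝ] W →ₗ[ℝ] LW) (wV : V →ₗ[ℝ] V →ₗ[ℝ] LV)
    (hWgram : ∀ u1 u2 v1 v2 : W, (inner ℝ (wW u1 u2) (wW v1 v2) : ℝ)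
      = inner ℝ u1 v1 * inner ℝ u2 v2 - inner ℝ u1 v2 * inner ℝ u2 v1)
    (hVgram : ∀ u1 u2 v1 v2 : V, (inner ℝ (wV u1 u2) (wV v1 v2) : ℝ)
      = inner ℝ u1 v1 * inner ℝ u2 v2 - inner ℝ u1 v2 * inner ℝ u2 v1)
    (T : W →ₗ[ℝ] V) (F : LW →ₗ[ℝ] LV)
    (hTF : ∀ u v : W, F (wW u v) = wV (T u) (T v))
    (hcontr : ∀ ω : LW, ‖F ω‖ ≤ ‖ω‖)
    (ε : OrthonormalBasis (Fin n) ℝ W)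
    (hunit : ∀ i j, i < j → ‖wV (T (ε i)) (T (ε j))‖ = 1) :
    ∀ i j, i ≠ j → (inner ℝ (T (ε i)) (T (ε j)) : ℝ) = 0 := by
  have horth : ∀ i j : Fin n, (inner ℝ (ε i) (ε j) : ℝ) = if i = j then 1 else 0 :=
    fun i j => orthonormal_iff_ite.mp ε.orthonormal i j
  -- squared contraction
  have sq_le : ∀ ω : LW, (inner ℝ (F ω) (F ω) : ℝ) ≤ inner ℝ ω ω := by
    intro ω
    rw [real_inner_self_eq_norm_mul_norm, real_inner_self_eq_norm_mul_norm]
    exact mul_self_le_mul_self (norm_nonneg _) (hcontr ω)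
  -- unit condition, symmetrized
  have hone : ∀ i j, i ≠ j →
      (inner ℝ (T (ε i)) (T (ε i)) * inner ℝ (T (ε j)) (T (ε j))
        - inner ℝ (T (ε i)) (T (ε j)) * inner ℝ (T (ε j)) (T (ε i)) : ℝ) = 1 := by
    have key : ∀ i j, i < j →
        (inner ℝ (T (ε i)) (T (ε i)) * inner ℝ (T (ε j)) (T (ε j))
          - inner ℝ (T (ε i)) (T (ε j)) * inner ℝ (T (ε j)) (T (ε i)) : ℝ) = 1 := by
      intro i j hij
      have h2 : (inner ℝ (wV (T (ε i)) (T (ε j))) (wV (T (ε i)) (T (ε j))) : ℝ) = 1 := by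
        rw [real_inner_self_eq_norm_mul_norm, hunit i j hij]; ring
      rw [hVgram] at h2
      linear_combination h2
    intro i j hij
    rcases lt_or_gt_of_ne hij with h | h
    · exact key i j h
    · linear_combination key j i h
  -- key relation: for distinct a b c, g_ab g_bc = g_ac g_bb
  have hR : ∀ a b c : Fin n, a ≠ b → b ≠ c → a ≠ c →
      (inner ℝ (T (ε a)) (T (ε b)) * inner ℝ (T (ε b)) (T (ε c)) : ℝ)
        = inner ℝ (T (ε a)) (T (ε c)) * inner ℝ (T (ε b)) (T (ε b)) := by
    intro a b c hab hbc hac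
    set x := wW (ε a) (ε b) with hx
    set y := wW (ε b) (ε c) with hy
    have hxx : (inner ℝ x x : ℝ) = 1 := by
      rw [hx, hWgram]; simp [horth, hab, hab.symm]
    have hyy : (inner ℝ y y : ℝ) = 1 := by
      rw [hy, hWgram]; simp [horth, hbc, hbc.symm]
    have hxy : (inner ℝ x y : ℝ) = 0 := by
      rw [hx, hy, hWgram]; simp [horth, hab, hbc, hac, hab.symm, hbc.symm, hac.symm]
    have hFx : F x = wV (T (ε a)) (T (ε b)) := hTF _ _
    have hFy : F y = wV (T (ε b)) (T (ε c)) := hTF _ _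
    have hA : (inner ℝ (F x) (F x) : ℝ) = 1 := by
      rw [hFx, hVgram]; exact hone a b hab
    have hB : (inner ℝ (F y) (F y) : ℝ) = 1 := by
      rw [hFy, hVgram]; exact hone b c hbc
    have l1 := sq_le (x + y)
    rw [map_add, real_inner_add_add_self, real_inner_add_add_self,
      hA, hB, hxx, hyy, hxy] at l1
    have l2 := sq_le (x - y)
    rw [map_sub, real_inner_sub_sub_self, real_inner_sub_sub_self,
      hA, hB, hxx, hyy, hxy] at l2
    have hXF : (inner ℝ (F x) (F y) : ℝ) = 0 := by linarith
    rw [hFx, hFy, hVgram] at hXF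
    linarith
  -- positivity of diagonal entries
  haveI : Nontrivial (Fin n) := by
    refine Fin.nontrivial_iff_two_le.mpr (by omega)
  have gpos : ∀ i : Fin n, (0 : ℝ) < inner ℝ (T (ε i)) (T (ε i)) := by
    intro i
    obtain ⟨j, hj⟩ := exists_ne i
    have h1 := hone i j (Ne.symm hj)
    have hsq : (0:ℝ) ≤ inner ℝ (T (ε i)) (T (ε j)) * inner ℝ (T (ε j)) (T (ε i)) := by
      rw [real_inner_comm (T (ε j))]; exact mul_self_nonneg _
    nlinarith [real_inner_self_nonneg (x := T (ε i)),
      real_inner_self_nonneg (x := T (ε j))]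
  -- product vanishing: g_ac g_bc = 0 for distinct a b c
  have hprod : ∀ a b c : Fin n, a ≠ b → b ≠ c → a ≠ c →
      (inner ℝ (T (ε a)) (T (ε c)) * inner ℝ (T (ε b)) (T (ε c)) : ℝ) = 0 := by
    intro a b c hab hbc hac
    have h1 := hR a b c hab hbc hac
    have h2 := hR b a c hab.symm hac hbc
    have h3 := hone a b hab
    have hcomm : (inner ℝ (T (ε b)) (T (ε a)) : ℝ) = inner ℝ (T (ε a)) (T (ε b)) :=
      real_inner_comm _ _
    rw [hcomm] at h2 h3
    linear_combination (-(inner ℝ (T (ε a)) (T (ε c)) * inner ℝ (T (ε b)) (T (ε c)) : ℝ)) * h3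
      + (-(inner ℝ (T (ε a)) (T (ε b)) * inner ℝ (T (ε b)) (T (ε c)) : ℝ)) * h2
      + (-(inner ℝ (T (ε b)) (T (ε c)) * inner ℝ (T (ε a)) (T (ε a)) : ℝ)) * h1
  -- conclusion
  intro i j hij
  by_contra hne
  -- find k distinct from i and j
  obtain ⟨k, hk⟩ : ∃ k : Fin n, k ∉ ({i, j} : Finset (Fin n)) := by
    have hne2 : (({i, j} : Finset (Fin n))ᶜ).Nonempty := by
      apply Finset.card_pos.mp
      rw [Finset.card_compl]
      have h1 : ({i, j} : Finset (Fin n)).card ≤ 2 :=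
        (Finset.card_insert_le _ _).trans (by simp)
      have h2 : Fintype.card (Fin n) = n := Fintype.card_fin n
      omega
    obtain ⟨k, hk⟩ := hne2
    exact ⟨k, Finset.mem_compl.mp hk⟩
  simp only [Finset.mem_insert, Finset.mem_singleton, not_or] at hk
  obtain ⟨hki, hkj⟩ := hk
  -- g_ij * g_kj = 0 from triple (i,k,j)
  have hz : (inner ℝ (T (ε i)) (T (ε j)) * inner ℝ (T (ε k)) (T (ε j)) : ℝ) = 0 :=
    hprod i k j (Ne.symm hki) hkj hij
  have hkj0 : (inner ℝ (T (ε k)) (T (ε j)) : ℝ) = 0 := by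
    rcases mul_eq_zero.mp hz with h | h
    · exact absurd h hne
    · exact h
  -- R(i,k,j): g_ik g_kj = g_ij g_kk
  have hR2 := hR i k j (Ne.symm hki) hkj hij
  rw [hkj0, mul_zero] at hR2
  have := gpos k
  have : (inner ℝ (T (ε i)) (T (ε j)) : ℝ) = 0 := by
    rcases mul_eq_zero.mp hR2.symm with h | h
    · exact h
    · linarith
  exact hne this
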